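/- arXiv:1503.05293 — 10 statements merged into one kernel-verified Lean document; each statement's English description precedes it below -/
import Mathlib

section
/- Let H be a real Hilbert space, J : H → ℝ a convex, absolutely one-homogeneous functional, and f ∈ H an eigenfunction, i.e. λ • f ∈ ∂J(f) for some λ > 0. Define u : ℝ → H by u(t) = max(1 - λ*t, 0) • f and p : ℝ → H by p(t) = λ • f for t < 1/λ and p(t) = 0 for t ≥ 1/λ. Then u(0) = f, for every t ≥ 0 one has p(t) ∈ ∂J(u(t)), and for every t > 0 with t ≠ 1/λ the function u is differentiable at t with derivative u'(t) = -p(t). In other words, u solves the gradient flow ∂ₜu = -p, p ∈ ∂J(u), u(0) = f. -/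
open RealInnerProductSpace

/-- For an eigenfunction `f` of `J` (i.e. `λ • f ∈ ∂J(f)`, `λ > 0`), the function
`u(t) = max(1 - λt, 0) • f` together with `p(t) = λ • f` for `t < 1/λ`, `p(t) = 0` for
`t ≥ 1/λ`, solves the gradient flow `∂ₜu = -p`, `p ∈ ∂J(u)`, `u(0) = f`. -/
theorem spectral_stmt4 {H : Type*} [NormedAddCommGroup H] [InnerProductSpace ℝ H]
    [CompleteSpace H] (J : H → ℝ) (hJconv : ConvexOn ℝ Set.univ J)
    (hJhom : ∀ (c : ℝ) (u : H), J (c • u) = |c| * J u)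
    (f : H) (lam : ℝ) (hlam : 0 < lam)
    (heig : ∀ v : H, J f + ⟪lam • f, v - f⟫ ≤ J v)
    (u p : ℝ → H)
    (hu : ∀ t : ℝ, u t = max (1 - lam * t) 0 • f)
    (hp : ∀ t : ℝ, p t = if t < 1 / lam then lam • f else 0) :
    u 0 = f ∧
    (∀ t : ℝ, 0 ≤ t → ∀ v : H, J (u t) + ⟪p t, v - u t⟫ ≤ J v) ∧
    (∀ t : ℝ, 0 < t → t ≠ 1 / lam → HasDerivAt u (-(p t)) t) := by
  have hJ0 : J (0 : H) = 0 := by simpa using hJhom 0 0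
  have h1 : J f ≤ ⟪lam • f, f⟫ := by
    have h := heig 0
    rw [hJ0, zero_sub, inner_neg_right] at h
    linarith
  have h2 : ⟪lam • f, f⟫ ≤ J f := by
    have h := heig ((2:ℝ) • f)
    have h2f : J ((2:ℝ) • f) = 2 * J f := by rw [hJhom]; norm_num
    have hsub : (2:ℝ) • f - f = f := by rw [two_smul]; abel
    rw [h2f, hsub] at h
    linarith
  have hIf : ⟪lam • f, f⟫ = J f := le_antisymm h2 h1
  have hkey : ∀ v : H, ⟪lam • f, v⟫ ≤ J v := by
    intro v
    have h := heig v
    rw [inner_sub_right] at h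
    linarith
  have hJnn : ∀ v : H, 0 ≤ J v := by
    intro v
    have ha := hkey v
    have hb := hkey (-v)
    have hneg : J (-v) = J v := by
      have := hJhom (-1) v; simpa using this
    rw [hneg, inner_neg_right] at hb
    linarith
  refine ⟨by rw [hu]; simp, ?_, ?_⟩
  · intro t ht v
    rw [hu, hp]
    by_cases hlt : t < 1 / lam
    · have hc : 0 < 1 - lam * t := by
        rw [lt_div_iff₀ hlam] at hlt
        nlinarith
      rw [if_pos hlt, max_eq_left hc.le, hJhom, abs_of_pos hc,
        inner_sub_right, real_inner_smul_right, hIf]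
      linarith [hkey v]
    · have hc : 1 - lam * t ≤ 0 := by
        rw [not_lt, div_le_iff₀ hlam] at hlt
        nlinarith
      rw [if_neg hlt, max_eq_right hc, zero_smul, inner_zero_left, hJ0]
      simpa using hJnn v
  · intro t ht hne
    rcases lt_or_gt_of_ne hne with hlt | hgt
    · have hmem : Set.Iio (1 / lam) ∈ nhds t := Iio_mem_nhds hlt
      have heq : u =ᶠ[nhds t] fun s => (1 - lam * s) • f := by
        filter_upwards [hmem] with s hs
        have h0 : 0 ≤ 1 - lam * s := by
          rw [Set.mem_Iio, lt_div_iff₀ hlam] at hs; nlinarith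
        rw [hu, max_eq_left h0]
      have hd : HasDerivAt (fun s => (1 - lam * s) • f) ((-lam) • f) t := by
        have hs : HasDerivAt (fun s : ℝ => 1 - lam * s) (-lam) t := by
          simpa using ((hasDerivAt_id t).const_mul lam).const_sub 1
        exact hs.smul_const f
      rw [hp, if_pos hlt, ← neg_smul]
      exact hd.congr_of_eventuallyEq heq
    · have hmem : Set.Ioi (1 / lam) ∈ nhds t := Ioi_mem_nhds hgt
      have heq : u =ᶠ[nhds t] fun _ => (0 : H) := by
        filter_upwards [hmem] with s hs
        have h0 : 1 - lam * s ≤ 0 := by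
          rw [Set.mem_Ioi, div_lt_iff₀ hlam] at hs; nlinarith
        rw [hu, max_eq_right h0, zero_smul]
      have hd : HasDerivAt u 0 t :=
        (hasDerivAt_const t (0 : H)).congr_of_eventuallyEq heq
      rw [hp, if_neg (not_lt.mpr hgt.le)]
      simpa using hd
end

section
/- Let H be a real Hilbert space, J : H → ℝ a convex, absolutely one-homogeneous functional, and f ∈ H an eigenfunction, i.e. λ • f ∈ ∂J(f) for some λ > 0. Then for every t > 0, the element u(t) = max(1 - λ*t, 0) • f is a minimizer of the variational problem u ↦ (1/2)‖u - f‖² + t * J(u) over H, and it is the unique minimizer. -/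
open RealInnerProductSpace

/-- For an eigenfunction `f` of `J` (i.e. `λ • f ∈ ∂J(f)`, `λ > 0`) and `t > 0`,
`u(t) = max(1 - λt, 0) • f` is the unique minimizer of `u ↦ (1/2)‖u - f‖² + t J(u)`. -/
theorem spectral_stmt5 {H : Type*} [NormedAddCommGroup H] [InnerProductSpace ℝ H]
    [CompleteSpace H] (J : H → ℝ) (hJconv : ConvexOn ℝ Set.univ J)
    (hJhom : ∀ (c : ℝ) (u : H), J (c • u) = |c| * J u)
    (f : H) (lam : ℝ) (hlam : 0 < lam)
    (heig : ∀ v : H, J f + ⟪lam • f, v - f⟫ ≤ J v)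
    (t : ℝ) (ht : 0 < t) :
    (∀ w : H,
      (1 / 2) * ‖max (1 - lam * t) 0 • f - f‖ ^ 2 + t * J (max (1 - lam * t) 0 • f)
        ≤ (1 / 2) * ‖w - f‖ ^ 2 + t * J w) ∧
    (∀ w : H,
      (∀ w' : H, (1 / 2) * ‖w - f‖ ^ 2 + t * J w ≤ (1 / 2) * ‖w' - f‖ ^ 2 + t * J w') →
      w = max (1 - lam * t) 0 • f) := by
  set c : ℝ := max (1 - lam * t) 0 with hc
  set u : H := c • f with hu
  have hc0 : 0 ≤ c := le_max_right _ _
  have hJ0 : J 0 = 0 := by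
    have := hJhom 0 0
    simpa using this
  have hJneg : ∀ v : H, J (-v) = J v := by
    intro v
    have := hJhom (-1) v
    simpa using this
  have hJnonneg : ∀ v : H, 0 ≤ J v := by
    intro v
    have h := hJconv.2 (Set.mem_univ v) (Set.mem_univ (-v))
      (by norm_num : (0:ℝ) ≤ 1/2) (by norm_num : (0:ℝ) ≤ 1/2) (by norm_num)
    have hz : (1/2 : ℝ) • v + (1/2 : ℝ) • (-v) = 0 := by module
    rw [hz, hJ0, hJneg] at h
    simp only [smul_eq_mul] at h
    linarith
  have hpf : ⟪lam • f, f⟫ = J f := by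
    have h1 := heig 0
    have h2 := heig ((2:ℝ) • f)
    rw [hJ0] at h1
    rw [hJhom] at h2
    have hff : (2:ℝ) • f - f = f := by module
    rw [hff] at h2
    rw [show (0:H) - f = -f by abel, inner_neg_right] at h1
    rw [abs_of_nonneg (by norm_num : (0:ℝ) ≤ 2)] at h2
    linarith
  have hsub : ∀ v : H, ⟪lam • f, v⟫ ≤ J v := by
    intro v
    have h := heig v
    rw [inner_sub_right, hpf] at h
    linarith
  -- key inequality
  have hkey : ∀ w : H, t * J u + ⟪f - u, w - u⟫ ≤ t * J w := by
    intro w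
    rcases le_or_gt 0 (1 - lam * t) with hpos | hneg
    · have hcv : c = 1 - lam * t := max_eq_left hpos
      have hfu : f - u = (lam * t) • f := by
        rw [hu, hcv]; module
      have hJu : J u = c * J f := by
        rw [hu, hJhom, abs_of_nonneg hc0]
      have hinner : ⟪f - u, w - u⟫ = t * (⟪lam • f, w⟫ - c * ⟪lam • f, f⟫) := by
        rw [hfu, inner_sub_right, hu]
        simp only [real_inner_smul_left, real_inner_smul_right]
        ring
      have h := hsub w
      rw [hJu, hinner, hpf]
      nlinarith [hsub w]
    · have hcv : c = 0 := max_eq_right (le_of_lt hneg)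
      have hu0 : u = 0 := by rw [hu, hcv, zero_smul]
      rw [hu0, hJ0, sub_zero, sub_zero, mul_zero, zero_add]
      have h := hsub w
      rw [real_inner_smul_left] at h
      nlinarith [hJnonneg w]
  -- strong inequality
  have hstrong : ∀ w : H,
      (1 / 2) * ‖u - f‖ ^ 2 + t * J u + (1 / 2) * ‖w - u‖ ^ 2
        ≤ (1 / 2) * ‖w - f‖ ^ 2 + t * J w := by
    intro w
    have hexp : ‖w - f‖ ^ 2 = ‖w - u‖ ^ 2 + 2 * ⟪w - u, u - f⟫ + ‖u - f‖ ^ 2 := by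
      rw [show w - f = (w - u) + (u - f) by abel]
      exact norm_add_sq_real (w - u) (u - f)
    have hi : ⟪w - u, u - f⟫ = -⟪f - u, w - u⟫ := by
      rw [show u - f = -(f - u) by abel, inner_neg_right, real_inner_comm]
    have := hkey w
    rw [hexp, hi]
    linarith
  constructor
  · intro w
    have := hstrong w
    nlinarith [sq_nonneg ‖w - u‖]
  · intro w hw
    have h1 := hw u
    have h2 := hstrong w
    have hz : ‖w - u‖ ^ 2 ≤ 0 := by linarith
    have : ‖w - u‖ = 0 := by nlinarith [norm_nonneg (w - u)]
    have := norm_sub_eq_zero_iff.mp this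
    rw [this]
end

section
/- Let H be a real Hilbert space, J : H → ℝ a convex, absolutely one-homogeneous functional, and f ∈ H an eigenfunction, i.e. λ • f ∈ ∂J(f) for some λ > 0. Define v : ℝ → H by v(s) = 0 for s < λ and v(s) = f for s ≥ λ, and q : ℝ → H by q(s) = min(s, λ) • f for s ≥ 0. Then v(0) = 0, q(s) ∈ ∂J(v(s)) for every s ≥ 0, and for every s > 0 with s ≠ λ the function q is differentiable at s with derivative q'(s) = f - v(s). In other words, (v, q) solves the inverse scale space flow ∂ₛq = f - v, q ∈ ∂J(v), v(0) = 0. -/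
open RealInnerProductSpace

/-- For an eigenfunction `f` of `J` (i.e. `λ • f ∈ ∂J(f)`, `λ > 0`), the pair
`v(s) = 0` for `s < λ`, `v(s) = f` for `s ≥ λ`, and `q(s) = min(s, λ) • f`, solves the
inverse scale space flow `∂ₛq = f - v`, `q ∈ ∂J(v)`, `v(0) = 0`. -/
theorem spectral_stmt6 {H : Type*} [NormedAddCommGroup H] [InnerProductSpace ℝ H]
    [CompleteSpace H] (J : H → ℝ) (hJconv : ConvexOn ℝ Set.univ J)
    (hJhom : ∀ (c : ℝ) (u : H), J (c • u) = |c| * J u)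
    (f : H) (lam : ℝ) (hlam : 0 < lam)
    (heig : ∀ w : H, J f + ⟪lam • f, w - f⟫ ≤ J w)
    (v q : ℝ → H)
    (hv : ∀ s : ℝ, v s = if s < lam then 0 else f)
    (hq : ∀ s : ℝ, 0 ≤ s → q s = min s lam • f) :
    v 0 = 0 ∧
    (∀ s : ℝ, 0 ≤ s → ∀ w : H, J (v s) + ⟪q s, w - v s⟫ ≤ J w) ∧
    (∀ s : ℝ, 0 < s → s ≠ lam → HasDerivAt q (f - v s) s) := by
  have hJ0 : J 0 = 0 := by
    have h := hJhom 0 0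
    simpa using h
  have hJneg : ∀ w : H, J (-w) = J w := by
    intro w
    have h := hJhom (-1) w
    simpa using h
  have hJf : J f = lam * ⟪f, f⟫ := by
    have h1 := heig ((2 : ℝ) • f)
    have h2 := heig 0
    have hJ2 : J ((2 : ℝ) • f) = 2 * J f := by
      have h := hJhom 2 f
      norm_num at h
      linarith [h]
    have e1 : (2 : ℝ) • f - f = f := by
      rw [two_smul]; abel
    rw [e1, hJ2, real_inner_smul_left] at h1
    rw [hJ0] at h2
    have e2 : ⟪lam • f, 0 - f⟫ = -(lam * ⟪f, f⟫) := by
      rw [real_inner_smul_left, zero_sub, inner_neg_right]; ring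
    rw [e2] at h2
    linarith
  have hlow : ∀ w : H, lam * ⟪f, w⟫ ≤ J w := by
    intro w
    have h := heig w
    rw [inner_sub_right, real_inner_smul_left, real_inner_smul_left] at h
    linarith
  have habs : ∀ w : H, lam * |⟪f, w⟫| ≤ J w := by
    intro w
    rcases abs_cases (⟪f, w⟫ : ℝ) with ⟨he, _⟩ | ⟨he, _⟩
    · rw [he]; exact hlow w
    · rw [he]
      have h := hlow (-w)
      rw [inner_neg_right, hJneg] at h
      linarith
  refine ⟨by simp [hv 0, hlam], ?_, ?_⟩
  · intro s hs w
    rw [hv s, hq s hs]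
    by_cases hsl : s < lam
    · rw [if_pos hsl]
      have hmin : min s lam = s := min_eq_left hsl.le
      rw [hmin, sub_zero, hJ0, real_inner_smul_left, zero_add]
      have h1 : s * ⟪f, w⟫ ≤ s * |⟪f, w⟫| := by
        apply mul_le_mul_of_nonneg_left (le_abs_self _) hs
      have h2 : s * |⟪f, w⟫| ≤ lam * |⟪f, w⟫| :=
        mul_le_mul_of_nonneg_right hsl.le (abs_nonneg _)
      linarith [habs w]
    · rw [if_neg hsl]
      have hmin : min s lam = lam := min_eq_right (not_lt.mp hsl)
      rw [hmin]
      exact heig w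
  · intro s hs hsl
    rcases lt_or_gt_of_ne hsl with hlt | hgt
    · have hvf : f - v s = f := by rw [hv s, if_pos hlt, sub_zero]
      rw [hvf]
      have hev : q =ᶠ[nhds s] fun t => t • f := by
        have : Set.Ioo (0 : ℝ) lam ∈ nhds s := Ioo_mem_nhds hs hlt
        filter_upwards [this] with t ht
        rw [hq t ht.1.le, min_eq_left ht.2.le]
      have hd : HasDerivAt (fun t : ℝ => t • f) f s := by
        simpa using (hasDerivAt_id s).smul_const f
      exact hd.congr_of_eventuallyEq hev
    · have hvf : f - v s = 0 := by
        rw [hv s, if_neg (not_lt.mpr hgt.le), sub_self]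
      rw [hvf]
      have hev : q =ᶠ[nhds s] fun _ => lam • f := by
        have : Set.Ioi lam ∈ nhds s := Ioi_mem_nhds hgt
        filter_upwards [this] with t ht
        rw [hq t (hlam.le.trans (le_of_lt ht)), min_eq_right (le_of_lt ht)]
      exact (hasDerivAt_const s (lam • f)).congr_of_eventuallyEq hev
end

section
/- Let H be a real Hilbert space, f ∈ H, and u : (0, ∞) → H twice differentiable with u(t) → f as t → 0⁺, u(t) → 0 and t • u'(t) → 0 as t → ∞, and t • u'(t) → 0 as t → 0⁺. If the function t ↦ t • u''(t) is Bochner integrable on (0, ∞), then ∫₀^∞ t • u''(t) dt = f. (Reconstruction of the signal from the wavelength spectral representation φ(t) = t ∂ₜₜ u(t).) -/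
open MeasureTheory Filter

/-- Reconstruction of the signal from the wavelength spectral representation
`φ(t) = t • u''(t)`: under suitable decay assumptions, `∫₀^∞ t • u''(t) dt = f`. -/
theorem spectral_stmt7 {H : Type*} [NormedAddCommGroup H] [InnerProductSpace ℝ H]
    [CompleteSpace H] (f : H) (u u' u'' : ℝ → H)
    (hu' : ∀ t : ℝ, 0 < t → HasDerivAt u (u' t) t)
    (hu'' : ∀ t : ℝ, 0 < t → HasDerivAt u' (u'' t) t)
    (hu0 : Tendsto u (nhdsWithin 0 (Set.Ioi 0)) (nhds f))
    (huinf : Tendsto u atTop (nhds 0))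
    (hderinf : Tendsto (fun t : ℝ => t • u' t) atTop (nhds (0 : H)))
    (hder0 : Tendsto (fun t : ℝ => t • u' t) (nhdsWithin 0 (Set.Ioi 0)) (nhds (0 : H)))
    (hint : IntegrableOn (fun t : ℝ => t • u'' t) (Set.Ioi 0)) :
    ∫ t in Set.Ioi 0, t • u'' t = f := by
  set g : ℝ → H := fun t => if 0 < t then t • u' t - u t else -f with hg
  have hgeq : ∀ t : ℝ, 0 < t → g t = t • u' t - u t := fun t ht => if_pos ht
  have hderiv : ∀ t ∈ Set.Ioi (0 : ℝ), HasDerivAt g (t • u'' t) t := by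
    intro t ht
    have h1 : HasDerivAt (fun s : ℝ => s • u' s - u s) (t • u'' t) t := by
      have := ((hasDerivAt_id t).smul (hu'' t ht)).sub (hu' t ht)
      simp at this
      exact this
    refine h1.congr_of_eventuallyEq ?_
    filter_upwards [eventually_gt_nhds ht] with s hs
    exact hgeq s hs
  have hcont : ContinuousWithinAt g (Set.Ici 0) 0 := by
    have h0 : g 0 = -f := if_neg (lt_irrefl 0)
    rw [ContinuousWithinAt, h0]
    have : Tendsto g (nhdsWithin 0 (Set.Ioi 0)) (nhds (-f)) := by
      have := hder0.sub hu0
      simp only [zero_sub] at this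
      refine this.congr' ?_
      filter_upwards [self_mem_nhdsWithin] with s hs
      exact (hgeq s hs).symm
    rw [← Set.Ioi_insert, nhdsWithin_insert]
    refine tendsto_sup.mpr ⟨?_, this⟩
    simpa [h0] using tendsto_pure_nhds g 0
  have hinf : Tendsto g atTop (nhds (0 : H)) := by
    have := hderinf.sub huinf
    simp only [sub_zero] at this
    refine this.congr' ?_
    filter_upwards [eventually_gt_atTop 0] with s hs
    exact (hgeq s hs).symm
  have key := MeasureTheory.integral_Ioi_of_hasDerivAt_of_tendsto hcont hderiv hint hinf
  have h0 : g 0 = -f := if_neg (lt_irrefl 0)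
  rw [key, h0, sub_neg_eq_add, zero_add]
end

section
/- Let H be a real Hilbert space and J : H → ℝ convex. Suppose u : ℝ → H is differentiable at t₀, p₀ ∈ ∂J(u(t₀)), and the scalar function t ↦ J(u(t)) is differentiable at t₀. Then the derivative of t ↦ J(u(t)) at t₀ equals ⟪p₀, u'(t₀)⟫. In particular, if u solves a gradient flow, i.e. u'(t₀) = -p₀, then (d/dt) J(u(t))|_{t=t₀} = -‖p₀‖². -/
open RealInnerProductSpace

/-- Chain rule along the flow: if `u` is differentiable at `t₀`, `p₀ ∈ ∂J(u(t₀))` and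
`t ↦ J(u(t))` is differentiable at `t₀`, then its derivative equals `⟪p₀, u'(t₀)⟫`.
In particular, for a gradient flow `u'(t₀) = -p₀` the derivative is `-‖p₀‖²`. -/
theorem spectral_stmt8 {H : Type*} [NormedAddCommGroup H] [InnerProductSpace ℝ H]
    [CompleteSpace H] (J : H → ℝ) (hJconv : ConvexOn ℝ Set.univ J)
    (u : ℝ → H) (u' p₀ : H) (t₀ d : ℝ)
    (hu : HasDerivAt u u' t₀)
    (hp : ∀ v : H, J (u t₀) + ⟪p₀, v - u t₀⟫ ≤ J v)
    (hd : HasDerivAt (fun t => J (u t)) d t₀) :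
    d = ⟪p₀, u'⟫ ∧ (u' = -p₀ → d = -‖p₀‖ ^ 2) := by
  have hinner : HasDerivAt (fun t => ⟪p₀, u t⟫) ⟪p₀, u'⟫ t₀ := by
    have h := (innerSL ℝ p₀).hasFDerivAt.comp_hasDerivAt t₀ hu
    simp at h
    exact h
  set g : ℝ → ℝ := fun t => J (u t) - J (u t₀) - ⟪p₀, u t - u t₀⟫ with hg
  have hgderiv : HasDerivAt g (d - ⟪p₀, u'⟫) t₀ := by
    have : HasDerivAt (fun t => J (u t) - J (u t₀) - ⟪p₀, u t⟫ + ⟪p₀, u t₀⟫)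
        (d - ⟪p₀, u'⟫) t₀ := (((hd.sub_const _).sub hinner).add_const _)
    refine this.congr_of_eventuallyEq (Filter.Eventually.of_forall fun t => ?_)
    simp [hg, inner_sub_right]; ring
  have hmin : IsLocalMin g t₀ := by
    refine Filter.Eventually.of_forall fun t => ?_
    have := hp (u t)
    show g t₀ ≤ g t
    simp only [hg, sub_self, inner_zero_right]
    linarith
  have h0 : d - ⟪p₀, u'⟫ = 0 := hmin.hasDerivAt_eq_zero hgderiv
  have h1 : d = ⟪p₀, u'⟫ := by linarith
  refine ⟨h1, fun h => ?_⟩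
  rw [h1, h, inner_neg_right, real_inner_self_eq_norm_sq]
end

section
/- Let H be a real Hilbert space and J : H → ℝ a convex, absolutely one-homogeneous functional. Let u, p : ℝ → H be differentiable at t₀ with u'(t₀) = -p(t₀) and p(t) ∈ ∂J(u(t)) for all t in a neighborhood of t₀, and assume the scalar function t ↦ J(u(t)) is differentiable at t₀. Then ⟪p'(t₀), u(t₀)⟫ = 0; equivalently, the wavelength spectral component φ(t₀) = -t₀ • p'(t₀) is orthogonal to u(t₀). -/
open RealInnerProductSpace Filter

/-- Orthogonality of the spectral decomposition: along the gradient flow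
`u' = -p`, `p ∈ ∂J(u)` of a convex one-homogeneous functional `J`, one has
`⟪p'(t₀), u(t₀)⟫ = 0`, i.e. `φ(t₀) = -t₀ • p'(t₀)` is orthogonal to `u(t₀)`. -/
theorem spectral_stmt9 {H : Type*} [NormedAddCommGroup H] [InnerProductSpace ℝ H]
    [CompleteSpace H] (J : H → ℝ) (hJconv : ConvexOn ℝ Set.univ J)
    (hJhom : ∀ (c : ℝ) (u : H), J (c • u) = |c| * J u)
    (u p : ℝ → H) (p' : H) (t₀ d : ℝ)
    (hu : HasDerivAt u (-(p t₀)) t₀)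
    (hp' : HasDerivAt p p' t₀)
    (hsub : ∀ᶠ t in nhds t₀, ∀ v : H, J (u t) + ⟪p t, v - u t⟫ ≤ J v)
    (hd : HasDerivAt (fun t => J (u t)) d t₀) :
    ⟪p', u t₀⟫ = 0 := by
  have hJ0 : J 0 = 0 := by
    have := hJhom 0 0
    simpa using this
  -- Euler identity: ⟪p t, u t⟫ = J (u t) eventually
  have heuler : ∀ᶠ t in nhds t₀, ⟪p t, u t⟫ = J (u t) := by
    filter_upwards [hsub] with t ht
    have h1 := ht 0
    have h2 := ht ((2 : ℝ) • u t)
    rw [hJhom 2 (u t)] at h2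
    have e1 : ⟪p t, (0 : H) - u t⟫ = -⟪p t, u t⟫ := by
      simp [inner_sub_right]
    have e2 : ⟪p t, (2 : ℝ) • u t - u t⟫ = ⟪p t, u t⟫ := by
      rw [two_smul]; simp [inner_add_right, inner_sub_right]
    rw [hJ0, e1] at h1
    rw [e2] at h2
    norm_num at h1 h2 ⊢
    linarith
  -- product rule derivative of ⟪p t, u t⟫
  have hprod : HasDerivAt (fun t => ⟪p t, u t⟫)
      (⟪p t₀, -(p t₀)⟫ + ⟪p', u t₀⟫) t₀ := hp'.inner ℝ hu
  have hfd : HasDerivAt (fun t => ⟪p t, u t⟫) d t₀ :=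
    hd.congr_of_eventuallyEq heuler
  have key1 : ⟪p t₀, -(p t₀)⟫ + ⟪p', u t₀⟫ = d := hprod.unique hfd
  -- d = -‖p t₀‖² via local min of g(t) = J(u t) - ⟪p t₀, u t⟫
  have hg : HasDerivAt (fun t => J (u t) - ⟪p t₀, u t⟫)
      (d - ⟪p t₀, -(p t₀)⟫) t₀ := by
    have : HasDerivAt (fun t => ⟪p t₀, u t⟫) (⟪p t₀, -(p t₀)⟫) t₀ := by
      have := (hasDerivAt_const t₀ (p t₀)).inner ℝ hu
      simpa using this
    exact hd.sub this
  have hmin : IsLocalMin (fun t => J (u t) - ⟪p t₀, u t⟫) t₀ := by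
    have h0 := hsub.self_of_nhds
    apply Filter.Eventually.mono (Filter.univ_mem)
    intro t _
    have := h0 (u t)
    have : J (u t₀) + ⟪p t₀, u t - u t₀⟫ ≤ J (u t) := h0 (u t)
    simp only [inner_sub_right] at this
    simp only []
    linarith
  have hz : d - ⟪p t₀, -(p t₀)⟫ = 0 := hmin.hasDerivAt_eq_zero hg
  linarith [key1, hz]
end

section
/- Let H be a real Hilbert space and J : H → ℝ a convex, absolutely one-homogeneous functional. Let u : [0, ∞) → H be differentiable on (0, ∞) and continuous at 0 with u(0) = f, satisfying the gradient flow u'(t) = -p(t) with p(t) ∈ ∂J(u(t)) for all t > 0, and suppose ‖u(t)‖ → 0 as t → ∞ and t ↦ J(u(t)) is integrable on (0, ∞). Then ‖f‖² = 2 ∫₀^∞ J(u(t)) dt. (Nonlinear Parseval identity: with the spectral response S(t) defined via S(t)² = 2 J(u(t)) ⁻type normalization, ‖f‖² = ∫₀^∞ S(t)² dt.) -/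
open RealInnerProductSpace MeasureTheory Filter

/-- Nonlinear Parseval identity: along the gradient flow of a convex absolutely
one-homogeneous functional `J` starting at `f`, with `‖u(t)‖ → 0` and `J(u(·))`
integrable, one has `‖f‖² = 2 ∫₀^∞ J(u(t)) dt`. -/
theorem spectral_stmt10 {H : Type*} [NormedAddCommGroup H] [InnerProductSpace ℝ H]
    [CompleteSpace H] (J : H → ℝ) (hJconv : ConvexOn ℝ Set.univ J)
    (hJhom : ∀ (c : ℝ) (u : H), J (c • u) = |c| * J u)
    (f : H) (u p : ℝ → H)
    (hu0 : u 0 = f)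
    (hcont : ContinuousWithinAt u (Set.Ici 0) 0)
    (hflow : ∀ t : ℝ, 0 < t → HasDerivAt u (-(p t)) t)
    (hsub : ∀ t : ℝ, 0 < t → ∀ v : H, J (u t) + ⟪p t, v - u t⟫ ≤ J v)
    (hdecay : Tendsto (fun t : ℝ => ‖u t‖) atTop (nhds 0))
    (hint : IntegrableOn (fun t : ℝ => J (u t)) (Set.Ioi 0)) :
    ‖f‖ ^ 2 = 2 * ∫ t in Set.Ioi 0, J (u t) := by
  have hJ0 : J 0 = 0 := by
    have := hJhom 0 0
    simpa using this
  -- key: ⟪p t, u t⟫ = J (u t) for t > 0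
  have hkey : ∀ t : ℝ, 0 < t → ⟪p t, u t⟫ = J (u t) := by
    intro t ht
    have h1 := hsub t ht ((2:ℝ) • u t)
    have h2 := hsub t ht 0
    rw [hJhom 2 (u t)] at h1
    simp only [zero_sub, inner_neg_right] at h2
    rw [hJ0] at h2
    have : (2 : ℝ) • u t - u t = u t := by
      rw [two_smul]; abel
    rw [this] at h1
    norm_num at h1 h2
    linarith
  -- φ t = ⟪u t, u t⟫ has derivative -2 J(u t) on Ioi 0
  have hderiv : ∀ t ∈ Set.Ioi (0:ℝ), HasDerivAt (fun s => ⟪u s, u s⟫)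
      (-2 * J (u t)) t := by
    intro t ht
    have h := (hflow t ht).inner ℝ (hflow t ht)
    refine h.congr_deriv ?_
    rw [inner_neg_right, inner_neg_left, real_inner_comm, hkey t ht]
    ring
  have hcont' : ContinuousWithinAt (fun s => ⟪u s, u s⟫) (Set.Ici 0) 0 := by
    exact (continuous_inner.continuousAt.comp_continuousWithinAt (hcont.prodMk hcont))
  have hlim : Tendsto (fun s => ⟪u s, u s⟫ : ℝ → ℝ) atTop (nhds 0) := by
    have : Tendsto (fun s : ℝ => ‖u s‖ * ‖u s‖) atTop (nhds (0 * 0)) :=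
      hdecay.mul hdecay
    simp only [mul_zero] at this
    refine Tendsto.congr (fun s => ?_) this
    rw [← real_inner_self_eq_norm_mul_norm]
  have hint' : IntegrableOn (fun t : ℝ => -2 * J (u t)) (Set.Ioi 0) :=
    hint.const_mul (-2)
  have hftc := MeasureTheory.integral_Ioi_of_hasDerivAt_of_tendsto hcont' hderiv hint' hlim
  rw [MeasureTheory.integral_const_mul] at hftc
  have hiff : ⟪u 0, u 0⟫ = ‖f‖ ^ 2 := by
    rw [hu0, real_inner_self_eq_norm_sq]
  rw [hiff] at hftc
  linarith
end

section
/- Let g ∈ ℝⁿ and define z : (0, ∞) → ℝⁿ by z(t)_i = sign(g_i) * max(|g_i| - t, 0). Then for every t > 0 with t ∉ {|g_1|, …, |g_n|}, z is differentiable at t with (z'(t))_i = 0 if |g_i| < t and (z'(t))_i = -sign(g_i) if |g_i| > t, and moreover -z'(t) ∈ ∂‖·‖₁(z(t)), i.e. the soft-shrinkage path satisfies the ℓ¹ gradient flow ∂ₜz ∈ -∂‖z‖₁. Hence the variational (soft-shrinkage) solution and the gradient flow solution for J(z) = ‖z‖₁ coincide. -/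
open RealInnerProductSpace

/-- The soft-shrinkage path `z(t)_i = sign(g_i) * max(|g_i| - t, 0)` satisfies the ℓ¹
gradient flow: for `t > 0` away from the values `|g_i|`, `z` is differentiable at `t`
with `(z'(t))_i = 0` if `|g_i| < t` and `-sign(g_i)` otherwise, and
`-z'(t) ∈ ∂‖·‖₁(z(t))`. Hence the variational (soft-shrinkage) solution and the
gradient flow solution for `J = ‖·‖₁` coincide. -/
theorem spectral_stmt15 (n : ℕ) (g : EuclideanSpace ℝ (Fin n))
    (z : ℝ → EuclideanSpace ℝ (Fin n))
    (hz : ∀ t : ℝ, ∀ i, z t i = Real.sign (g i) * max (|g i| - t) 0)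
    (t : ℝ) (ht : 0 < t) (htg : ∀ i, t ≠ |g i|)
    (z' : EuclideanSpace ℝ (Fin n))
    (hz' : ∀ i, z' i = if |g i| < t then 0 else -Real.sign (g i)) :
    HasDerivAt z z' t ∧
    (∀ v : EuclideanSpace ℝ (Fin n), (∑ i, |z t i|) + ⟪-z', v - z t⟫ ≤ ∑ i, |v i|) := by
  constructor
  · -- derivative
    set e := (PiLp.continuousLinearEquiv 2 ℝ (fun _ : Fin n => ℝ)).symm with he
    have h1 : HasDerivAt (fun s => (fun i => Real.sign (g i) * max (|g i| - s) 0 : Fin n → ℝ))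
        (fun i => if |g i| < t then 0 else -Real.sign (g i)) t := by
      apply hasDerivAt_pi.mpr
      intro i
      rcases (htg i).lt_or_gt with h | h
      · -- t < |g i|
        rw [if_neg (not_lt.mpr h.le)]
        have hd : HasDerivAt (fun s : ℝ => Real.sign (g i) * (|g i| - s))
            (Real.sign (g i) * (-1)) t := ((hasDerivAt_id t).const_sub _).const_mul _
        rw [mul_neg_one] at hd
        refine hd.congr_of_eventuallyEq ?_
        filter_upwards [eventually_lt_nhds h] with s hs
        rw [max_eq_left (by linarith)]
      · -- |g i| < t
        rw [if_pos h]
        have hd : HasDerivAt (fun _ : ℝ => Real.sign (g i) * 0) (0 : ℝ) t :=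
          hasDerivAt_const _ _
        refine hd.congr_of_eventuallyEq ?_
        filter_upwards [eventually_gt_nhds h] with s hs
        rw [max_eq_right (by linarith)]
    have h2 := e.toContinuousLinearMap.hasFDerivAt.comp_hasDerivAt t h1
    have hzz : z = fun s => e (fun i => Real.sign (g i) * max (|g i| - s) 0) := by
      funext s
      ext i
      simpa [he] using hz s i
    have hz'e : z' = e (fun i => if |g i| < t then 0 else -Real.sign (g i)) := by
      ext i
      simpa [he] using hz' i
    rw [hzz, hz'e]
    exact h2
  · intro v
    have hinner : ⟪-z', v - z t⟫ = ∑ i, (-(z' i)) * (v i - z t i) := by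
      simp [PiLp.inner_apply, RCLike.inner_apply]
      exact Finset.sum_congr rfl fun i _ => mul_comm _ _
    rw [hinner, ← Finset.sum_add_distrib]
    apply Finset.sum_le_sum
    intro i _
    have hv1 : v i ≤ |v i| := le_abs_self _
    have hv2 : -(v i) ≤ |v i| := neg_le_abs _
    rcases (htg i).lt_or_gt with h | h
    · -- t < |g i|
      have hg0 : g i ≠ 0 := by
        intro h0
        rw [h0] at h
        simp at h
        linarith
      have hzt : z t i = Real.sign (g i) * (|g i| - t) := by
        rw [hz t i, max_eq_left (by linarith)]
      rw [hz' i, if_neg (not_lt.mpr h.le)]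
      rcases hg0.lt_or_gt with hneg | hpos
      · rw [Real.sign_of_neg hneg] at hzt ⊢
        rw [hzt]
        rw [show (-1 : ℝ) * (|g i| - t) = -(|g i| - t) by ring,
          abs_neg, abs_of_pos (by linarith)]
        nlinarith
      · rw [Real.sign_of_pos hpos] at hzt ⊢
        rw [hzt, one_mul, abs_of_pos (by linarith)]
        nlinarith
    · -- |g i| < t
      have hzt : z t i = 0 := by
        rw [hz t i, max_eq_right (by linarith), mul_zero]
      rw [hz' i, if_pos h, hzt]
      simp [abs_nonneg]
end

section
/- Let g ∈ ℝⁿ and define z : [0, ∞) → ℝⁿ by z(s)_i = g_i if s * |g_i| ≥ 1 and z(s)_i = 0 otherwise, and q : [0, ∞) → ℝⁿ by q(s)_i = sign(g_i) * min(s * |g_i|, 1). Then z(0) = 0, q(s) ∈ ∂‖·‖₁(z(s)) for every s ≥ 0, and for every s > 0 with s ∉ {1/|g_i| : g_i ≠ 0}, q is differentiable at s with q'(s) = g - z(s). In other words, (z, q) solves the inverse scale space flow ∂ₛq = g - z, q ∈ ∂‖z‖₁, z(0) = 0, and the solution performs hard thresholding of the coefficients g at threshold 1/s. -/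
open RealInnerProductSpace

/-- The inverse scale space flow for `J = ‖·‖₁` performs hard thresholding: with
`z(s)_i = g_i` if `s|g_i| ≥ 1` and `0` otherwise, and `q(s)_i = sign(g_i) * min(s|g_i|, 1)`,
one has `z(0) = 0`, `q(s) ∈ ∂‖·‖₁(z(s))` for `s ≥ 0`, and `q'(s) = g - z(s)` for
`s > 0` away from the values `1/|g_i|`. -/
theorem spectral_stmt16 (n : ℕ) (g : EuclideanSpace ℝ (Fin n))
    (z q : ℝ → EuclideanSpace ℝ (Fin n))
    (hz : ∀ s : ℝ, 0 ≤ s → ∀ i, z s i = if 1 ≤ s * |g i| then g i else 0)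
    (hq : ∀ s : ℝ, 0 ≤ s → ∀ i, q s i = Real.sign (g i) * min (s * |g i|) 1) :
    z 0 = 0 ∧
    (∀ s : ℝ, 0 ≤ s → ∀ v : EuclideanSpace ℝ (Fin n),
      (∑ i, |z s i|) + ⟪q s, v - z s⟫ ≤ ∑ i, |v i|) ∧
    (∀ s : ℝ, 0 < s → (∀ i, g i ≠ 0 → s ≠ 1 / |g i|) → HasDerivAt q (g - z s) s) := by
  have habs : ∀ x : ℝ, |Real.sign x| ≤ 1 := by
    intro x
    rcases lt_trichotomy x 0 with h|h|h
    · simp [Real.sign_of_neg h]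
    · simp [h]
    · simp [Real.sign_of_pos h]
  have hsm : ∀ x : ℝ, Real.sign x * x = |x| := by
    intro x
    rcases lt_trichotomy x 0 with h|h|h
    · simp [Real.sign_of_neg h, abs_of_neg h]
    · simp [h]
    · simp [Real.sign_of_pos h, abs_of_pos h]
  have hsa : ∀ x : ℝ, Real.sign x * |x| = x := by
    intro x
    rcases lt_trichotomy x 0 with h|h|h
    · simp [Real.sign_of_neg h, abs_of_neg h]
    · simp [h]
    · simp [Real.sign_of_pos h, abs_of_pos h]
  refine ⟨?_, ?_, ?_⟩
  · ext i
    simp [hz 0 le_rfl i]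
  · intro s hs v
    have hinner : ⟪q s, v - z s⟫ = ∑ i, q s i * (v i - z s i) := by
      simp [PiLp.inner_apply, RCLike.inner_apply, conj_trivial]
      exact Finset.sum_congr rfl fun i _ => mul_comm _ _
    rw [hinner, ← Finset.sum_add_distrib]
    apply Finset.sum_le_sum
    intro i _
    have hq1 : |q s i| ≤ 1 := by
      rw [hq s hs i, abs_mul]
      have h1 : |min (s * |g i|) 1| ≤ 1 := by
        rw [abs_of_nonneg (le_min (by positivity) zero_le_one)]
        exact min_le_right _ _
      calc |Real.sign (g i)| * |min (s * |g i|) 1| ≤ 1 * 1 :=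
            mul_le_mul (habs _) h1 (abs_nonneg _) zero_le_one
        _ = 1 := one_mul 1
    have hqz : q s i * z s i = |z s i| := by
      rw [hq s hs i, hz s hs i]
      by_cases h : 1 ≤ s * |g i|
      · simp [h, min_eq_right h, hsm]
      · simp [h]
    have : |z s i| + q s i * (v i - z s i) = q s i * v i := by
      rw [mul_sub, hqz]; ring
    rw [this]
    calc q s i * v i ≤ |q s i * v i| := le_abs_self _
      _ = |q s i| * |v i| := abs_mul _ _
      _ ≤ 1 * |v i| := mul_le_mul_of_nonneg_right hq1 (abs_nonneg _)
      _ = |v i| := one_mul _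
  · intro s hs hne
    set d : EuclideanSpace ℝ (Fin n) := g - z s with hd
    have hev : ∀ᶠ t in nhds s, ∀ i, q t i = q s i + (t - s) * d i := by
      have hpos : ∀ᶠ t in nhds s, 0 < t := eventually_gt_nhds hs
      have hall : ∀ i, ∀ᶠ t in nhds s, 0 < t → q t i = q s i + (t - s) * d i := by
        intro i
        by_cases hg : g i = 0
        · filter_upwards with t ht
          simp [hq t ht.le i, hq s hs.le i, hg, hd, PiLp.sub_apply, hz s hs.le i]
        · have hsne : s * |g i| ≠ 1 := by
            intro h
            exact hne i hg (by field_simp [abs_ne_zero.mpr hg] at h ⊢; linarith)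
          rcases lt_or_gt_of_ne hsne with hlt | hgt
          · have : ∀ᶠ t in nhds s, t * |g i| < 1 := by
              have : Continuous fun t : ℝ => t * |g i| := by continuity
              exact this.continuousAt.eventually_lt continuousAt_const hlt
            filter_upwards [this] with t htl ht
            have hdi : d i = g i := by
              simp [hd, PiLp.sub_apply, hz s hs.le i, not_le.mpr hlt]
            rw [hq t ht.le i, hq s hs.le i, min_eq_left htl.le,
              min_eq_left hlt.le, hdi]
            nlinarith [hsa (g i)]
          · have : ∀ᶠ t in nhds s, 1 < t * |g i| := by
              have : Continuous fun t : ℝ => t * |g i| := by continuity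
              exact continuousAt_const.eventually_lt this.continuousAt hgt
            filter_upwards [this] with t htl ht
            have hdi : d i = 0 := by
              simp [hd, PiLp.sub_apply, hz s hs.le i, hgt.le]
            rw [hq t ht.le i, hq s hs.le i, min_eq_right htl.le,
              min_eq_right hgt.le, hdi]
            ring
      have := (Filter.eventually_all.2 hall).and hpos
      filter_upwards [this] with t ⟨h1, h2⟩ i
      exact h1 i h2
    have hev' : (fun t => q s + (t - s) • d) =ᶠ[nhds s] q := by
      filter_upwards [hev] with t ht
      ext i
      simp [PiLp.add_apply, PiLp.smul_apply, smul_eq_mul, ht i]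
    have hbase : HasDerivAt (fun t : ℝ => q s + (t - s) • d) d s := by
      have h1 : HasDerivAt (fun t : ℝ => t - s) 1 s := (hasDerivAt_id s).sub_const s
      have := (h1.smul_const d).const_add (q s)
      simpa using this
    exact hbase.congr_of_eventuallyEq hev'.symm
end

section
/- Let H be a real Hilbert space, J : H → ℝ a convex, absolutely one-homogeneous functional, and f ∈ H an eigenfunction, i.e. λ • f ∈ ∂J(f) for some λ > 0. Let u(t) = max(1 - λ*t, 0) • f be the gradient flow solution. Then for 0 ≤ t < 1/λ one has J(u(t)) = λ * (1 - λ*t) * ‖f‖², and for t ≥ 1/λ one has J(u(t)) = 0; in particular ∫₀^∞ J(u(t)) dt = ‖f‖²/2, confirming the Parseval identity for eigenfunctions. -/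
open RealInnerProductSpace MeasureTheory

/-- For an eigenfunction `f` of `J` with `λ • f ∈ ∂J(f)`, `λ > 0`, and the gradient flow
solution `u(t) = max(1 - λt, 0) • f`, one has `J(u(t)) = λ(1 - λt)‖f‖²` for
`0 ≤ t < 1/λ` and `J(u(t)) = 0` for `t ≥ 1/λ`; in particular
`∫₀^∞ J(u(t)) dt = ‖f‖²/2` (Parseval identity for eigenfunctions). -/
theorem spectral_stmt17 {H : Type*} [NormedAddCommGroup H] [InnerProductSpace ℝ H]
    [CompleteSpace H] (J : H → ℝ) (hJconv : ConvexOn ℝ Set.univ J)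
    (hJhom : ∀ (c : ℝ) (u : H), J (c • u) = |c| * J u)
    (f : H) (lam : ℝ) (hlam : 0 < lam)
    (heig : ∀ v : H, J f + ⟪lam • f, v - f⟫ ≤ J v)
    (u : ℝ → H) (hu : ∀ t : ℝ, u t = max (1 - lam * t) 0 • f) :
    (∀ t : ℝ, 0 ≤ t → t < 1 / lam → J (u t) = lam * (1 - lam * t) * ‖f‖ ^ 2) ∧
    (∀ t : ℝ, 1 / lam ≤ t → J (u t) = 0) ∧
    (∫ t in Set.Ioi (0 : ℝ), J (u t)) = ‖f‖ ^ 2 / 2 := by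
  have hJ0 : J 0 = 0 := by
    have := hJhom 0 0
    simpa using this
  -- J f = lam * ‖f‖^2
  have hJf : J f = lam * ‖f‖ ^ 2 := by
    have h1 := heig 0
    have h2 := heig ((2:ℝ) • f)
    rw [hJ0] at h1
    have hin1 : ⟪lam • f, (0 : H) - f⟫ = -(lam * ‖f‖ ^ 2) := by
      simp [inner_smul_left, inner_smul_right, real_inner_self_eq_norm_sq]
    have hin2 : ⟪lam • f, (2 : ℝ) • f - f⟫ = lam * ‖f‖ ^ 2 := by
      have h2f : ((2 : ℝ) • f : H) - f = f := by
        rw [two_smul]; abel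
      rw [h2f, real_inner_smul_left, real_inner_self_eq_norm_sq]
    have hJ2f : J ((2 : ℝ) • f) = 2 * J f := by
      have := hJhom 2 f
      rw [abs_of_pos (by norm_num : (0:ℝ) < 2)] at this
      simpa using this
    rw [hin1] at h1
    rw [hin2, hJ2f] at h2
    linarith
  have key : ∀ t : ℝ, J (u t) = max (1 - lam * t) 0 * (lam * ‖f‖ ^ 2) := by
    intro t
    rw [hu t, hJhom, abs_of_nonneg (le_max_right _ _), hJf]
  refine ⟨?_, ?_, ?_⟩
  · intro t ht htl
    have : 1 - lam * t > 0 := by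
      have : lam * t < 1 := by
        rw [lt_div_iff₀ hlam] at htl; linarith [htl]
      linarith
    rw [key t, max_eq_left this.le]; ring
  · intro t ht
    have : 1 - lam * t ≤ 0 := by
      rw [div_le_iff₀ hlam] at ht
      nlinarith
    rw [key t, max_eq_right this]; ring
  · have hb : (0 : ℝ) < 1 / lam := by positivity
    have hsplit : Set.Ioi (0:ℝ) = Set.Ioc 0 (1/lam) ∪ Set.Ioi (1/lam) :=
      (Set.Ioc_union_Ioi_eq_Ioi hb.le).symm
    have hcongr : ∀ t : ℝ, J (u t) = max (1 - lam * t) 0 * (lam * ‖f‖ ^ 2) := key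
    have hzero : ∫ t in Set.Ioi (1/lam), J (u t) = 0 := by
      rw [MeasureTheory.setIntegral_congr_fun measurableSet_Ioi
        (fun t ht => ?_)]
      · exact integral_zero _ _
      · show J (u t) = 0
        rw [key t, max_eq_right, zero_mul]
        have : 1 ≤ lam * t := by
          rw [Set.mem_Ioi, div_lt_iff₀ hlam] at ht
          linarith
        linarith
    have hIoc : ∫ t in Set.Ioc (0:ℝ) (1/lam), J (u t) = ‖f‖ ^ 2 / 2 := by
      have heq : ∫ t in Set.Ioc (0:ℝ) (1/lam), J (u t)
          = ∫ t in Set.Ioc (0:ℝ) (1/lam), (1 - lam * t) * (lam * ‖f‖ ^ 2) := by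
        refine MeasureTheory.setIntegral_congr_fun measurableSet_Ioc (fun t ht => ?_)
        show J (u t) = _
        rw [key t, max_eq_left]
        have : lam * t ≤ 1 := by
          have := ht.2
          rw [le_div_iff₀ hlam] at this
          linarith
        linarith
      rw [heq, ← intervalIntegral.integral_of_le hb.le]
      have : ∫ t in (0:ℝ)..(1/lam), (1 - lam * t) * (lam * ‖f‖ ^ 2)
          = (lam * ‖f‖ ^ 2) * ∫ t in (0:ℝ)..(1/lam), (1 - lam * t) := by
        rw [← intervalIntegral.integral_const_mul]
        congr 1; ext t; ring
      rw [this]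
      have hi : ∫ t in (0:ℝ)..(1/lam), (1 - lam * t)
          = 1/lam - lam * ((1/lam)^2/2) := by
        have : ∫ t in (0:ℝ)..(1/lam), (1 - lam * t)
            = (∫ t in (0:ℝ)..(1/lam), (1:ℝ)) - lam * ∫ t in (0:ℝ)..(1/lam), t := by
          rw [← intervalIntegral.integral_const_mul, ← intervalIntegral.integral_sub]
          · exact intervalIntegrable_const
          · exact (intervalIntegral.intervalIntegrable_id).const_mul lam
        rw [this, intervalIntegral.integral_const, integral_id]
        simp
      rw [hi]
      field_simp
      ring
    have hg : (fun t => J (u t)) = fun t => max (1 - lam * t) 0 * (lam * ‖f‖ ^ 2) :=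
      funext key
    have hcont : Continuous fun t : ℝ => max (1 - lam * t) 0 * (lam * ‖f‖ ^ 2) :=
      ((continuous_const.sub (continuous_const.mul continuous_id)).max
        continuous_const).mul continuous_const
    have hint1 : MeasureTheory.IntegrableOn (fun t => J (u t)) (Set.Ioc 0 (1/lam)) := by
      rw [hg]; exact hcont.integrableOn_Ioc
    have hint2 : MeasureTheory.IntegrableOn (fun t => J (u t)) (Set.Ioi (1/lam)) := by
      refine (MeasureTheory.integrableOn_zero).congr_fun (fun t ht => ?_) measurableSet_Ioi
      show (0:ℝ) = J (u t)
      rw [key t, max_eq_right, zero_mul]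
      have : 1 ≤ lam * t := by
        rw [Set.mem_Ioi, div_lt_iff₀ hlam] at ht
        linarith
      linarith
    rw [hsplit, MeasureTheory.setIntegral_union (Set.Ioc_disjoint_Ioi le_rfl)
      measurableSet_Ioi hint1 hint2, hzero, hIoc, add_zero]
end
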